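/- Suppose X is a complete nonsingular toric variety such that every primitive relation has right-hand side 0 or a single ray generator. Let {D₁,…,D_j} and {D̂₁,…,D̂_k} be distinct primitive sets with primitive relations ρ₁+⋯+ρ_j = ρ' and ρ̂₁+⋯+ρ̂_k = ρ̂'. If ρ' = ρ̂', then the two primitive sets are disjoint: {ρ₁,…,ρ_j} ∩ {ρ̂₁,…,ρ̂_k} = ∅. -/

import Mathlib

/-- A complete nonsingular (simplicial) fan in ℤⁿ, described combinatorially:
cones are recorded by their (finite) sets of primitive ray generators. -/
structure CompleteNonsingFan (n : ℕ) where
  rays : Finset (Fin n → ℤ)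
  cones : Finset (Finset (Fin n → ℤ))
  empty_mem : ∅ ∈ cones
  singleton_mem : ∀ ρ ∈ rays, {ρ} ∈ cones
  cone_rays : ∀ σ ∈ cones, σ ⊆ rays
  face_mem : ∀ σ ∈ cones, ∀ τ ⊆ σ, τ ∈ cones
  /-- nonsingularity: the generators of every cone form part of a ℤ-basis of ℤⁿ -/
  nonsingular : ∀ σ ∈ cones, ∃ b : Module.Basis (Fin n) ℤ (Fin n → ℤ),
      (σ : Set (Fin n → ℤ)) ⊆ Set.range ⇑b
  /-- completeness: every point of ℝⁿ lies in some cone -/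
  complete : ∀ x : Fin n → ℝ, ∃ σ ∈ cones, ∃ c : (Fin n → ℤ) → ℝ,
      (∀ v, 0 ≤ c v) ∧ x = ∑ v ∈ σ, c v • (fun i => (v i : ℝ))

/-- A primitive set: a set of rays not spanning a cone, every proper subset of
which spans a cone. -/
def IsPrimitiveSet {n : ℕ} (F : CompleteNonsingFan n) (P : Finset (Fin n → ℤ)) : Prop :=
  P ⊆ F.rays ∧ P ∉ F.cones ∧ ∀ ρ ∈ P, P.erase ρ ∈ F.cones

namespace StmtNine

variable {n : ℕ}

abbrev V (n : ℕ) := Fin n → ℤ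

/-- sum of `c v • v` over the rays -/
def vval (F : CompleteNonsingFan n) (c : V n → ℤ) : V n := ∑ v ∈ F.rays, c v • v

/-- total coefficient sum over the rays -/
def tot (F : CompleteNonsingFan n) (c : V n → ℤ) : ℤ := ∑ v ∈ F.rays, c v

/-- indicator function of a finite set -/
def χ (T : Finset (V n)) : V n → ℤ := fun v => if v ∈ T then 1 else 0

lemma chi_nonneg (T : Finset (V n)) (v : V n) : 0 ≤ χ T v := by
  unfold χ; split <;> simp

lemma chi_mem (T : Finset (V n)) (v : V n) (h : v ∈ T) : χ T v = 1 := by simp [χ, h]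

lemma chi_not_mem (T : Finset (V n)) (v : V n) (h : v ∉ T) : χ T v = 0 := by simp [χ, h]

lemma vval_add (F : CompleteNonsingFan n) (c e : V n → ℤ) :
    vval F (fun v => c v + e v) = vval F c + vval F e := by
  unfold vval; rw [← Finset.sum_add_distrib]; congr 1; ext v; rw [add_smul]

lemma vval_add_smul (F : CompleteNonsingFan n) (c e : V n → ℤ) (m : ℤ) :
    vval F (fun v => c v + m * e v) = vval F c + m • vval F e := by
  unfold vval
  rw [Finset.smul_sum, ← Finset.sum_add_distrib]
  congr 1; ext v; rw [add_smul, mul_smul]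

lemma vval_sub_smul (F : CompleteNonsingFan n) (c e : V n → ℤ) (m : ℤ) :
    vval F (fun v => c v - m * e v) = vval F c - m • vval F e := by
  have h : (fun v => c v - m * e v) = (fun v => c v + (-m) * e v) := by ext v; ring
  rw [h, vval_add_smul, neg_smul, ← sub_eq_add_neg]

lemma tot_add (F : CompleteNonsingFan n) (c e : V n → ℤ) :
    tot F (fun v => c v + e v) = tot F c + tot F e := by
  unfold tot; rw [← Finset.sum_add_distrib]

lemma tot_add_smul (F : CompleteNonsingFan n) (c e : V n → ℤ) (m : ℤ) :
    tot F (fun v => c v + m * e v) = tot F c + m * tot F e := by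
  unfold tot; rw [Finset.mul_sum, ← Finset.sum_add_distrib]

lemma tot_sub_smul (F : CompleteNonsingFan n) (c e : V n → ℤ) (m : ℤ) :
    tot F (fun v => c v - m * e v) = tot F c - m * tot F e := by
  have h : (fun v => c v - m * e v) = (fun v => c v + (-m) * e v) := by ext v; ring
  rw [h, tot_add_smul, neg_mul, ← sub_eq_add_neg]

lemma vval_chi (F : CompleteNonsingFan n) (T : Finset (V n)) (hT : T ⊆ F.rays) :
    vval F (χ T) = ∑ v ∈ T, v := by
  unfold vval χ
  rw [← Finset.sum_subset hT (by intro x _ hx; rw [if_neg hx, zero_smul])]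
  apply Finset.sum_congr rfl
  intro x hx; rw [if_pos hx, one_smul]

lemma tot_chi (F : CompleteNonsingFan n) (T : Finset (V n)) (hT : T ⊆ F.rays) :
    tot F (χ T) = T.card := by
  unfold tot χ
  rw [← Finset.sum_subset hT (by intro x _ hx; rw [if_neg hx])]
  simp

lemma tot_nonneg (F : CompleteNonsingFan n) (c : V n → ℤ) (hc : ∀ v, 0 ≤ c v) :
    0 ≤ tot F c := Finset.sum_nonneg (fun v _ => hc v)

/-- coefficients over a cone with zero combination vanish -/
lemma cone_coeff_zero (F : CompleteNonsingFan n) (κ : Finset (V n)) (hκ : κ ∈ F.cones)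
    (c : V n → ℤ) (hsupp : ∀ v, c v ≠ 0 → v ∈ κ) (h0 : vval F c = 0) :
    ∀ v, c v = 0 := by
  obtain ⟨B, hB⟩ := F.nonsingular κ hκ
  intro v₀
  by_contra hv₀
  have hv₀κ : v₀ ∈ κ := hsupp v₀ hv₀
  obtain ⟨i₀, hi₀⟩ := hB hv₀κ
  have hsum : vval F c = ∑ v ∈ κ, c v • v := by
    unfold vval
    rw [← Finset.sum_subset (F.cone_rays κ hκ)]
    intro x _ hx
    rw [of_not_not (fun h => hx (hsupp x h)), zero_smul]
  rw [hsum] at h0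
  have h1 : (B.repr (∑ v ∈ κ, c v • v)) i₀ = 0 := by rw [h0]; simp
  rw [map_sum] at h1
  have h2 : ∑ v ∈ κ, (B.repr (c v • v)) i₀ = 0 := by
    rw [← h1]; exact (Finsupp.finset_sum_apply κ (fun v => B.repr (c v • v)) i₀).symm
  have key : ∀ v ∈ κ, (B.repr (c v • v)) i₀ = if v = v₀ then c v else 0 := by
    intro v hv
    obtain ⟨j, hj⟩ := hB hv
    subst hj
    rw [map_smul, Finsupp.smul_apply, Module.Basis.repr_self, Finsupp.single_apply]
    have hiff : (j = i₀) ↔ (B j = v₀) := by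
      constructor
      · intro h; rw [h, hi₀]
      · intro h; exact B.injective (h.trans hi₀.symm)
    rcases Classical.em (j = i₀) with h | h
    · rw [if_pos h, if_pos (hiff.mp h)]; simp
    · rw [if_neg h, if_neg (fun hc => h (hiff.mpr hc))]; simp
  rw [Finset.sum_congr rfl key, Finset.sum_ite_eq' κ v₀ c, if_pos hv₀κ] at h2
  exact hv₀ h2

/-- a nonnegative combination over (a subset of) a cone with a positive coefficient is nonzero -/
lemma cone_pos_ne_zero (F : CompleteNonsingFan n) (κ : Finset (V n)) (hκ : κ ∈ F.cones)
    (c : V n → ℤ) (hsupp : ∀ v, c v ≠ 0 → v ∈ κ) (v₀ : V n) (hv₀ : c v₀ ≠ 0) :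
    vval F c ≠ 0 := by
  intro h0
  exact hv₀ (cone_coeff_zero F κ hκ c hsupp h0 v₀)

/-- every non-cone subset of the rays contains a primitive set -/
lemma exists_primitive (F : CompleteNonsingFan n) (T : Finset (V n)) :
    T ⊆ F.rays → T ∉ F.cones → ∃ R, R ⊆ T ∧ IsPrimitiveSet F R := by
  induction T using Finset.strongInduction with
  | _ T ih =>
    intro hTr hT
    by_cases hall : ∀ S ⊂ T, S ∈ F.cones
    · refine ⟨T, Finset.Subset.refl T, hTr, hT, ?_⟩
      intro ρ hρ
      exact hall _ (Finset.erase_ssubset hρ)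
    · push_neg at hall
      obtain ⟨S, hS1, hS2⟩ := hall
      obtain ⟨R, hR1, hR2⟩ := ih S hS1 (fun x hx => hTr (hS1.1 hx)) hS2
      exact ⟨R, fun x hx => hS1.1 (hR1 hx), hR2⟩

/-- a linear functional which is 1 on all elements of a cone -/
lemma exists_unit_functional (F : CompleteNonsingFan n) (κ : Finset (V n)) (hκ : κ ∈ F.cones) :
    ∃ ℓ : (V n) →ₗ[ℤ] ℤ, ∀ v ∈ κ, ℓ v = 1 := by
  obtain ⟨B, hB⟩ := F.nonsingular κ hκ
  classical
  refine ⟨∑ i ∈ Finset.univ.filter (fun i => B i ∈ κ), B.coord i, ?_⟩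
  intro v hv
  obtain ⟨j, hj⟩ := hB hv
  subst hj
  rw [LinearMap.sum_apply]
  simp only [Module.Basis.coord_apply, Module.Basis.repr_self, Finsupp.single_apply]
  rw [Finset.sum_ite_eq (Finset.univ.filter (fun i => B i ∈ κ)) j (fun _ => (1:ℤ))]
  rw [if_pos (Finset.mem_filter.mpr ⟨Finset.mem_univ j, hv⟩)]

/-- applying a functional to a `vval` -/
lemma lmap_vval (F : CompleteNonsingFan n) (ℓ : (V n) →ₗ[ℤ] ℤ) (c : V n → ℤ) :
    ℓ (vval F c) = ∑ v ∈ F.rays, c v * ℓ v := by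
  unfold vval
  rw [map_sum]
  apply Finset.sum_congr rfl
  intro v _
  rw [map_smul, smul_eq_mul]

/-- the sum of a singleton indicator -/
lemma vval_delta (F : CompleteNonsingFan n) (u : V n) (hu : u ∈ F.rays) :
    vval F (fun v => if v = u then 1 else 0) = u := by
  unfold vval
  rw [Finset.sum_eq_single u]
  · simp
  · intro b _ hb; simp [hb]
  · intro h; exact absurd hu h

lemma tot_delta (F : CompleteNonsingFan n) (u : V n) (hu : u ∈ F.rays) :
    tot F (fun v => if v = u then 1 else 0) = 1 := by
  unfold tot
  rw [Finset.sum_eq_single u]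
  · simp
  · intro b _ hb; simp [hb]
  · intro h; exact absurd hu h

lemma vval_comb2 (F : CompleteNonsingFan n) (f c e g : V n → ℤ) (m k : ℤ)
    (h : ∀ v, f v = c v + m * e v + k * g v) :
    vval F f = vval F c + m • vval F e + k • vval F g := by
  unfold vval
  rw [Finset.smul_sum, Finset.smul_sum, ← Finset.sum_add_distrib, ← Finset.sum_add_distrib]
  apply Finset.sum_congr rfl
  intro v _
  rw [h v, add_smul, add_smul, mul_smul, mul_smul]

lemma tot_comb2 (F : CompleteNonsingFan n) (f c e g : V n → ℤ) (m k : ℤ)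
    (h : ∀ v, f v = c v + m * e v + k * g v) :
    tot F f = tot F c + m * tot F e + k * tot F g := by
  unfold tot
  rw [Finset.mul_sum, Finset.mul_sum, ← Finset.sum_add_distrib, ← Finset.sum_add_distrib]
  apply Finset.sum_congr rfl
  intro v _
  rw [h v]

lemma vval_zero_of (F : CompleteNonsingFan n) (c : V n → ℤ) (h : ∀ v, c v = 0) :
    vval F c = 0 := by
  unfold vval; apply Finset.sum_eq_zero; intro v _; rw [h v, zero_smul]

/-- the key bound: `tot a ≤ Mp * tot b` for a double representation. -/
lemma bound_lemma (F : CompleteNonsingFan n) (σ₀ : Finset (V n))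
    (ℓ : (V n) →ₗ[ℤ] ℤ) (hℓ1 : ∀ v ∈ σ₀, ℓ v = 1) (Mp : ℤ)
    (hM : ∀ r ∈ F.rays, ℓ r ≤ Mp)
    (a b : V n → ℤ) (hb0 : ∀ v, 0 ≤ b v)
    (haσ : ∀ v, a v ≠ 0 → v ∈ σ₀)
    (heq : vval F a = vval F b) :
    tot F a ≤ Mp * tot F b := by
  have h1 : tot F a = ℓ (vval F a) := by
    rw [lmap_vval]
    unfold tot
    apply Finset.sum_congr rfl
    intro v _
    by_cases h : a v = 0
    · rw [h]; ring
    · rw [hℓ1 v (haσ v h), mul_one]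
  have h2 : ℓ (vval F b) ≤ Mp * tot F b := by
    rw [lmap_vval]
    unfold tot
    rw [Finset.mul_sum]
    apply Finset.sum_le_sum
    intro v hv
    calc b v * ℓ v ≤ b v * Mp := mul_le_mul_of_nonneg_left (hM v hv) (hb0 v)
    _ = Mp * b v := mul_comm _ _
  rw [h1, heq]
  exact h2

theorem main (F : CompleteNonsingFan n)
    (hprim : ∀ P, IsPrimitiveSet F P → (∑ v ∈ P, v = 0 ∨ ∑ v ∈ P, v ∈ F.rays))
    (σ₀ : Finset (V n)) (hσ₀ : σ₀ ∈ F.cones)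
    (ℓ : (V n) →ₗ[ℤ] ℤ) (hℓ1 : ∀ v ∈ σ₀, ℓ v = 1) (Mp : ℤ)
    (hM : ∀ r ∈ F.rays, ℓ r ≤ Mp) :
    ∀ (k₁ k₂ k₃ : ℕ) (τ₀ : Finset (V n)) (a b : V n → ℤ),
    τ₀ ∈ F.cones →
    (∀ v, 0 ≤ a v) → (∀ v, 0 ≤ b v) →
    (∀ v, a v ≠ 0 → v ∈ σ₀) → (∀ v, b v ≠ 0 → v ∈ τ₀) →
    (∀ v, a v = 0 ∨ b v = 0) →
    (∃ v, a v ≠ 0) → (∃ w, b w ≠ 0) →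
    vval F a = vval F b →
    (F.rays.filter (fun v => a v ≠ 0)).card ≤ k₁ →
    (tot F b).toNat ≤ k₂ →
    (Mp * tot F b + 1 - tot F a).toNat ≤ k₃ → False := by
  intro k₁
  induction k₁ using Nat.strong_induction_on with
  | _ k₁ IH1 =>
  intro k₂
  induction k₂ using Nat.strong_induction_on with
  | _ k₂ IH2 =>
  intro k₃
  induction k₃ using Nat.strong_induction_on with
  | _ k₃ IH3 =>
  intro τ₀ a b hτ₀ ha0 hb0 haσ hbτ hdisj hane hbne heq hk₁ hk₂ hk₃
  classical
  obtain ⟨va, hva⟩ := hane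
  obtain ⟨wb, hwb⟩ := hbne
  have haray : ∀ v, a v ≠ 0 → v ∈ F.rays := fun v h => F.cone_rays σ₀ hσ₀ (haσ v h)
  have hbray : ∀ v, b v ≠ 0 → v ∈ F.rays := fun v h => F.cone_rays τ₀ hτ₀ (hbτ v h)
  have ha1 : ∀ v, a v ≠ 0 → 1 ≤ a v := fun v h => by have := ha0 v; omega
  have hb1 : ∀ v, b v ≠ 0 → 1 ≤ b v := fun v h => by have := hb0 v; omega
  set Sa := F.rays.filter (fun v => a v ≠ 0) with hSa_def
  set Sb := F.rays.filter (fun v => b v ≠ 0) with hSb_def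
  -- the union of the supports is not a cone
  have hS : Sa ∪ Sb ∉ F.cones := by
    intro hS
    have hsupp : ∀ v, a v - b v ≠ 0 → v ∈ Sa ∪ Sb := by
      intro v h
      rcases hdisj v with h' | h'
      · exact Finset.mem_union_right _ (Finset.mem_filter.mpr ⟨hbray v (by intro hb; apply h; rw [h', hb]; ring), by intro hb; apply h; rw [h', hb]; ring⟩)
      · exact Finset.mem_union_left _ (Finset.mem_filter.mpr ⟨haray v (by intro hb; apply h; rw [h', hb]; ring), by intro hb; apply h; rw [h', hb]; ring⟩)
    have h0 : vval F (fun v => a v - b v) = 0 := by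
      have := vval_comb2 F (fun v => a v - b v) a b b (-1) 0 (by intro v; ring)
      simp only [neg_smul, one_smul, zero_smul, add_zero] at this
      rw [this, heq]; abel
    have := cone_coeff_zero F (Sa ∪ Sb) hS _ hsupp h0 va
    rcases hdisj va with h' | h'
    · exact hva h'
    · apply hva; omega
  have hSrays : Sa ∪ Sb ⊆ F.rays := by
    intro v hv
    rcases Finset.mem_union.mp hv with h | h
    · exact (Finset.mem_filter.mp h).1
    · exact (Finset.mem_filter.mp h).1
  obtain ⟨R, hRsub, hRprim⟩ := exists_primitive F (Sa ∪ Sb) hSrays hS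
  set R₁ := R.filter (fun v => a v ≠ 0) with hR₁_def
  set R₂ := R.filter (fun v => b v ≠ 0) with hR₂_def
  have hR₁a : ∀ v ∈ R₁, a v ≠ 0 := fun v hv => (Finset.mem_filter.mp hv).2
  have hR₂b : ∀ v ∈ R₂, b v ≠ 0 := fun v hv => (Finset.mem_filter.mp hv).2
  have hR₁rays : R₁ ⊆ F.rays := fun v hv => haray v (hR₁a v hv)
  have hR₂rays : R₂ ⊆ F.rays := fun v hv => hbray v (hR₂b v hv)
  have hRrays : R ⊆ F.rays := fun v hv => hSrays (hRsub hv)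
  have hchiR : ∀ v, χ R v = χ R₁ v + χ R₂ v := by
    intro v
    by_cases hv : v ∈ R
    · have hv' := hRsub hv
      rcases hdisj v with h' | h'
      · have h2 : v ∈ R₂ := Finset.mem_filter.mpr ⟨hv, by
          rcases Finset.mem_union.mp hv' with h | h
          · exact absurd (Finset.mem_filter.mp h).2 (by simp [h'])
          · exact (Finset.mem_filter.mp h).2⟩
        rw [chi_mem _ _ hv, chi_mem _ _ h2, chi_not_mem _ _ (by
          intro hc; exact (Finset.mem_filter.mp hc).2 h')]
        ring
      · have h2 : v ∈ R₁ := Finset.mem_filter.mpr ⟨hv, by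
          rcases Finset.mem_union.mp hv' with h | h
          · exact (Finset.mem_filter.mp h).2
          · exact absurd (Finset.mem_filter.mp h).2 (by simp [h'])⟩
        rw [chi_mem _ _ hv, chi_mem _ _ h2, chi_not_mem _ _ (by
          intro hc; exact (Finset.mem_filter.mp hc).2 h')]
        ring
    · rw [chi_not_mem _ _ hv, chi_not_mem _ _ (fun hc => hv (Finset.mem_filter.mp hc).1),
        chi_not_mem _ _ (fun hc => hv (Finset.mem_filter.mp hc).1)]
      ring
  have hchiRval : vval F (χ R) = vval F (χ R₁) + vval F (χ R₂) := by
    have := vval_comb2 F (χ R) (χ R₁) (χ R₂) (χ R₂) 1 0 (by intro v; rw [hchiR v]; ring)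
    simpa using this
  have hR₁ne : R₁.Nonempty := by
    by_contra h
    apply hRprim.2.1
    apply F.face_mem τ₀ hτ₀
    intro v hv
    apply hbτ
    rcases Finset.mem_union.mp (hRsub hv) with h' | h'
    · exact absurd (Finset.mem_filter.mpr ⟨hv, (Finset.mem_filter.mp h').2⟩)
        (fun hc => h ⟨v, hc⟩)
    · exact (Finset.mem_filter.mp h').2
  have hR₂ne : R₂.Nonempty := by
    by_contra h
    apply hRprim.2.1
    apply F.face_mem σ₀ hσ₀
    intro v hv
    apply haσ
    rcases Finset.mem_union.mp (hRsub hv) with h' | h'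
    · exact (Finset.mem_filter.mp h').2
    · exact absurd (Finset.mem_filter.mpr ⟨hv, (Finset.mem_filter.mp h').2⟩)
        (fun hc => h ⟨v, hc⟩)
  -- the reusable "null move": a relation 0 = ∑_{R'} v + ∑ e v • v with R' in the a-side
  -- support and e in the b-side support gives a strictly smaller instance.
  have nullmove : ∀ (R' : Finset (V n)) (e : V n → ℤ), R'.Nonempty → (∀ v ∈ R', a v ≠ 0) →
      (∀ v, 0 ≤ e v) → (∀ v, e v ≠ 0 → b v ≠ 0) →
      (0 : V n) = vval F (χ R') + vval F e → False := by
    intro R' e hne hR'a he0 hesupp hrel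
    obtain ⟨v₀, hv₀R, hv₀min⟩ := R'.exists_min_image a hne
    set m := a v₀ with hm_def
    have hm1 : 1 ≤ m := ha1 v₀ (hR'a v₀ hv₀R)
    set a' := fun v => a v - m * χ R' v with ha'_def
    set b' := fun v => b v + m * e v with hb'_def
    have hchival : vval F (χ R') = - vval F e := eq_neg_of_add_eq_zero_left hrel.symm
    have hvala' : vval F a' = vval F a - m • vval F (χ R') := by
      have := vval_comb2 F a' a (χ R') (χ R') (-m) 0 (by intro v; show a v - m * χ R' v = _; ring)
      simpa [neg_smul, sub_eq_add_neg] using this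
    have hvalb' : vval F b' = vval F b + m • vval F e := by
      have := vval_comb2 F b' b e e m 0 (by intro v; show b v + m * e v = _; ring)
      simpa using this
    have hval : vval F a' = vval F b' := by
      rw [hvala', hvalb', hchival, smul_neg, sub_neg_eq_add, heq]
    have ha'0 : ∀ v, 0 ≤ a' v := by
      intro v
      show 0 ≤ a v - m * χ R' v
      by_cases hv : v ∈ R'
      · rw [chi_mem _ _ hv]; have := hv₀min v hv; omega
      · rw [chi_not_mem _ _ hv]; have := ha0 v; omega
    have hsuppa' : ∀ v, a' v ≠ 0 → a v ≠ 0 := by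
      intro v h
      by_contra h0
      apply h
      show a v - m * χ R' v = 0
      rw [chi_not_mem _ _ (fun hc => hR'a v hc h0), h0]; ring
    have hb'0 : ∀ v, 0 ≤ b' v := by
      intro v
      show 0 ≤ b v + m * e v
      have h1 := hb0 v
      have h2 : 0 ≤ m * e v := mul_nonneg (by omega) (he0 v)
      omega
    have hsuppb' : ∀ v, b' v ≠ 0 → b v ≠ 0 := by
      intro v h
      by_contra h0
      apply h
      have he : e v = 0 := by
        by_contra hc; exact (hesupp v hc) h0
      show b v + m * e v = 0
      rw [h0, he]; ring
    by_cases hall : ∀ v, a' v = 0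
    · -- then the positive b'-side sums to zero, contradiction
      have hz' : vval F b' = 0 := by rw [← hval, vval_zero_of F a' hall]
      have hb'wb : b' wb ≠ 0 := by
        have h1 := hb1 wb hwb
        have h2 : 0 ≤ m * e wb := mul_nonneg (by omega) (he0 wb)
        show b wb + m * e wb ≠ 0
        omega
      exact cone_pos_ne_zero F τ₀ hτ₀ b' (fun v h => hbτ v (hsuppb' v h)) wb hb'wb hz'
    · push_neg at hall
      obtain ⟨va', hva'⟩ := hall
      have hsub2 : F.rays.filter (fun v => a' v ≠ 0) ⊆ Sa := by
        intro v hv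
        obtain ⟨h1, h2⟩ := Finset.mem_filter.mp hv
        exact Finset.mem_filter.mpr ⟨h1, hsuppa' v h2⟩
      have hssub : F.rays.filter (fun v => a' v ≠ 0) ⊂ Sa := by
        refine Finset.ssubset_iff_of_subset hsub2 |>.mpr ?_
        refine ⟨v₀, Finset.mem_filter.mpr ⟨haray v₀ (hR'a v₀ hv₀R), hR'a v₀ hv₀R⟩, ?_⟩
        intro hc
        apply (Finset.mem_filter.mp hc).2
        show a v₀ - m * χ R' v₀ = 0
        rw [chi_mem _ _ hv₀R]; ring
      apply IH1 (F.rays.filter (fun v => a' v ≠ 0)).card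
        (lt_of_lt_of_le (Finset.card_lt_card hssub) hk₁)
        (tot F b').toNat (Mp * tot F b' + 1 - tot F a').toNat τ₀ a' b' hτ₀
        ha'0 hb'0 (fun v h => haσ v (hsuppa' v h)) (fun v h => hbτ v (hsuppb' v h))
        ?_ ⟨va', hva'⟩ ?_ hval (le_refl _) (le_refl _) (le_refl _)
      · intro v
        rcases hdisj v with h | h
        · left
          by_contra hc
          exact (hsuppa' v hc) h
        · right
          by_contra hc
          exact (hsuppb' v hc) h
      · refine ⟨wb, ?_⟩
        have h1 := hb1 wb hwb
        have h2 : 0 ≤ m * e wb := mul_nonneg (by omega) (he0 wb)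
        show b wb + m * e wb ≠ 0
        omega
  rcases hprim R hRprim with hz | hray
  · -- case: the primitive set sums to zero
    have hrel : (0 : V n) = vval F (χ R₁) + vval F (χ R₂) := by
      rw [← hchiRval, vval_chi F R hRrays, hz]
    exact nullmove R₁ (χ R₂) hR₁ne hR₁a (chi_nonneg R₂)
      (fun v hv => hR₂b v (by by_contra h; exact hv (chi_not_mem _ _ h))) hrel
  · -- case: the primitive set sums to a ray u₀
    obtain ⟨ℓτ, hℓτ⟩ := exists_unit_functional F τ₀ hτ₀
    have chain : ∀ (kc : ℕ) (u : V n) (β d : V n → ℤ),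
        (∀ v, 0 ≤ β v) → (∀ v, β v ≠ 0 → b v ≠ 0) →
        vval F a + vval F (χ R₁) = vval F β + u →
        u ∈ F.rays →
        u = vval F (χ R₁) + vval F d →
        (∀ v, 0 ≤ d v) → (∀ v, d v ≠ 0 → b v ≠ 0) → (∃ v, d v ≠ 0) →
        tot F β < tot F b →
        (F.rays.filter (fun r => ℓτ u < ℓτ r)).card ≤ kc → False := by
      intro kc
      induction kc using Nat.strong_induction_on with
      | _ kc IHc =>
      intro u β d hβ0 hβsupp hVAL hurays hrel hd0 hdsupp hdne hβtot hkc
      have hβ1 : ∀ v, β v ≠ 0 → 1 ≤ β v := fun v h => by have := hβ0 v; omega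
      by_cases hua : a u = 0
      · by_cases hT : (F.rays.filter (fun v => β v ≠ 0)) ∪ {u} ∈ F.cones
        · -- E3 : build the new instance over the cone T
          set a2 := fun v => a v + χ R₁ v with ha2_def
          set b2 := fun v => β v + (if v = u then 1 else 0) with hb2_def
          have hvala2 : vval F a2 = vval F a + vval F (χ R₁) := by
            have h := vval_comb2 F a2 a (χ R₁) (χ R₁) 1 0
              (by intro v; show a v + χ R₁ v = _; ring)
            rw [one_smul, zero_smul, add_zero] at h
            exact h
          have hvalb2 : vval F b2 = vval F β + u := by
            have h := vval_comb2 F b2 β (fun v => if v = u then 1 else 0) (χ R₁) 1 0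
              (by intro v; show β v + _ = _; ring)
            rw [vval_delta F u hurays, one_smul, zero_smul, add_zero] at h
            exact h
          have hval : vval F a2 = vval F b2 := by rw [hvala2, hvalb2, hVAL]
          have ha20 : ∀ v, 0 ≤ a2 v := fun v => by
            show 0 ≤ a v + χ R₁ v
            have := ha0 v; have := chi_nonneg R₁ v; omega
          have hsuppa2 : ∀ v, a2 v ≠ 0 → a v ≠ 0 := by
            intro v h h0
            apply h; show a v + χ R₁ v = 0
            rw [h0, chi_not_mem _ _ (fun hc => hR₁a v hc h0)]; ring
          have hb20 : ∀ v, 0 ≤ b2 v := fun v => by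
            show 0 ≤ β v + _
            have := hβ0 v; split <;> omega
          have hsuppb2 : ∀ v, b2 v ≠ 0 → v ∈ (F.rays.filter (fun v => β v ≠ 0)) ∪ {u} := by
            intro v h
            by_cases hv : v = u
            · subst hv; exact Finset.mem_union_right _ (Finset.mem_singleton_self v)
            · have hβv : β v ≠ 0 := by
                intro h0; apply h; show β v + _ = 0; rw [h0, if_neg hv]; ring
              exact Finset.mem_union_left _
                (Finset.mem_filter.mpr ⟨hbray v (hβsupp v hβv), hβv⟩)
          have hdisj2 : ∀ v, a2 v = 0 ∨ b2 v = 0 := by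
            intro v
            by_cases hv : v = u
            · subst hv
              left; show a v + χ R₁ v = 0
              rw [hua, chi_not_mem _ _ (fun hc => hR₁a v hc hua)]; ring
            · rcases hdisj v with h | h
              · left; by_contra hc; exact hsuppa2 v hc h
              · right; show β v + _ = 0
                have hβv : β v = 0 := by by_contra hc; exact (hβsupp v hc) h
                rw [hβv, if_neg hv]; ring
          have hane2 : a2 va ≠ 0 := by
            show a va + χ R₁ va ≠ 0
            have := ha1 va hva; have := chi_nonneg R₁ va; omega
          have hbne2 : b2 u ≠ 0 := by
            show β u + _ ≠ 0
            rw [if_pos rfl]; have := hβ0 u; omega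
          have htotb2 : tot F b2 = tot F β + 1 := by
            have h := tot_comb2 F b2 β (fun v => if v = u then 1 else 0) (χ R₁) 1 0
              (by intro v; show β v + _ = _; ring)
            rw [tot_delta F u hurays] at h
            rw [h]; ring
          have htota2 : tot F a2 = tot F a + R₁.card := by
            have h := tot_comb2 F a2 a (χ R₁) (χ R₁) 1 0
              (by intro v; show a v + χ R₁ v = _; ring)
            rw [tot_chi F R₁ hR₁rays] at h
            rw [h]; ring
          have hk12 : (F.rays.filter (fun v => a2 v ≠ 0)).card ≤ k₁ := by
            refine le_trans (Finset.card_le_card ?_) hk₁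
            intro v hv
            obtain ⟨h1, h2⟩ := Finset.mem_filter.mp hv
            exact Finset.mem_filter.mpr ⟨h1, hsuppa2 v h2⟩
          rcases lt_or_ge (tot F b2) (tot F b) with hlt | hge
          · refine IH2 (tot F b2).toNat ?_ (Mp * tot F b2 + 1 - tot F a2).toNat _ a2 b2 hT
              ha20 hb20 (fun v h => haσ v (hsuppa2 v h)) hsuppb2 hdisj2 ⟨va, hane2⟩
              ⟨u, hbne2⟩ hval hk12 (le_refl _) (le_refl _)
            have h0 := tot_nonneg F b2 hb20
            omega
          · have heqt : tot F b2 = tot F b := by omega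
            have hbnd2 : tot F a2 ≤ Mp * tot F b := by
              have := bound_lemma F σ₀ ℓ hℓ1 Mp hM a2 b2 hb20
                (fun v h => haσ v (hsuppa2 v h)) hval
              rw [heqt] at this; exact this
            have hR₁card : 1 ≤ (R₁.card : ℤ) := by
              have := Finset.card_pos.mpr hR₁ne; exact_mod_cast this
            refine IH3 (Mp * tot F b2 + 1 - tot F a2).toNat ?_ _ a2 b2 hT
              ha20 hb20 (fun v h => haσ v (hsuppa2 v h)) hsuppb2 hdisj2 ⟨va, hane2⟩
              ⟨u, hbne2⟩ hval hk12 ?_ (le_refl _)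
            · rw [heqt]
              generalize hGX : Mp * tot F b = X at hbnd2 hk₃ ⊢
              omega
            · rw [heqt]; exact hk₂
        · -- chain step : extract a primitive subset of supp β ∪ {u}
          have hTrays : (F.rays.filter (fun v => β v ≠ 0)) ∪ {u} ⊆ F.rays := by
            intro v hv
            rcases Finset.mem_union.mp hv with h | h
            · exact (Finset.mem_filter.mp h).1
            · rw [Finset.mem_singleton.mp h]; exact hurays
          obtain ⟨R', hR'sub, hR'prim⟩ := exists_primitive F _ hTrays hT
          have huR' : u ∈ R' := by
            by_contra h
            apply hR'prim.2.1
            apply F.face_mem τ₀ hτ₀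
            intro v hv
            rcases Finset.mem_union.mp (hR'sub hv) with h' | h'
            · exact hbτ v (hβsupp v (Finset.mem_filter.mp h').2)
            · exact absurd (Finset.mem_singleton.mp h') (fun hc => h (hc ▸ hv))
          set W := R'.erase u with hW_def
          have hWβ : ∀ v ∈ W, β v ≠ 0 := by
            intro v hv
            have h1 : v ∈ R' := Finset.mem_of_mem_erase hv
            have h2 : v ≠ u := Finset.ne_of_mem_erase hv
            rcases Finset.mem_union.mp (hR'sub h1) with h' | h'
            · exact (Finset.mem_filter.mp h').2
            · exact absurd (Finset.mem_singleton.mp h') h2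
          have hWrays : W ⊆ F.rays := fun v hv => hbray v (hβsupp v (hWβ v hv))
          have hWτ : ∀ v ∈ W, v ∈ τ₀ := fun v hv => hbτ v (hβsupp v (hWβ v hv))
          have hWne : W.Nonempty := by
            by_contra h
            have hW0 : W = ∅ := Finset.not_nonempty_iff_eq_empty.mp h
            have hRu : R' = {u} := by
              apply Finset.Subset.antisymm
              · intro v hv
                rcases eq_or_ne v u with hc | hc
                · rw [hc]; exact Finset.mem_singleton_self u
                · exact absurd (Finset.mem_erase.mpr ⟨hc, hv⟩)
                    (by rw [← hW_def, hW0]; exact Finset.notMem_empty v)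
              · intro v hv; rw [Finset.mem_singleton.mp hv]; exact huR'
            exact hR'prim.2.1 (hRu ▸ F.singleton_mem u hurays)
          have hsplit : ∑ v ∈ R', v = u + ∑ v ∈ W, v := by
            conv_lhs => rw [← Finset.insert_erase huR']
            rw [Finset.sum_insert (Finset.notMem_erase u R')]
          rcases hprim R' hR'prim with hz' | hray'
          · -- null exit
            have hrelX : (0 : V n) = vval F (χ R₁) + vval F (fun v => d v + χ W v) := by
              have hvd : vval F (fun v => d v + χ W v) = vval F d + vval F (χ W) := by
                have h := vval_comb2 F (fun v => d v + χ W v) d (χ W) (χ W) 1 0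
                  (by intro v; show d v + χ W v = _; ring)
                rw [one_smul, zero_smul, add_zero] at h
                exact h
              rw [hvd, show vval F (χ R₁) + (vval F d + vval F (χ W)) =
                (vval F (χ R₁) + vval F d) + vval F (χ W) from by abel, ← hrel,
                vval_chi F W hWrays, ← hsplit, hz']
            refine nullmove R₁ (fun v => d v + χ W v) hR₁ne hR₁a ?_ ?_ hrelX
            · intro v; show 0 ≤ d v + χ W v; have := hd0 v; have := chi_nonneg W v; omega
            · intro v h
              rcases eq_or_ne (d v) 0 with h0 | h0
              · have hχ : χ W v ≠ 0 := by
                  intro hc; apply h; show d v + χ W v = 0; rw [h0, hc]; ring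
                have hvW : v ∈ W := by by_contra hc; exact hχ (chi_not_mem _ _ hc)
                exact hβsupp v (hWβ v hvW)
              · exact hdsupp v h0
          · -- recurse on a longer ray
            set u' := ∑ v ∈ R', v with hu'_def
            set β' := fun v => β v - χ W v with hβ'_def
            set d' := fun v => d v + χ W v with hd'_def
            have hβ'0 : ∀ v, 0 ≤ β' v := by
              intro v; show 0 ≤ β v - χ W v
              by_cases hv : v ∈ W
              · rw [chi_mem _ _ hv]; have := hβ1 v (hWβ v hv); omega
              · rw [chi_not_mem _ _ hv]; have := hβ0 v; omega
            have hβ'supp : ∀ v, β' v ≠ 0 → b v ≠ 0 := by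
              intro v h
              apply hβsupp v
              intro h0
              apply h; show β v - χ W v = 0
              rw [h0, chi_not_mem _ _ (fun hc => hWβ v hc h0)]; ring
            have hvalβ' : vval F β' = vval F β - vval F (χ W) := by
              have h := vval_comb2 F β' β (χ W) (χ W) (-1) 0
                (by intro v; show β v - χ W v = _; ring)
              rw [neg_one_smul, zero_smul, add_zero] at h
              rw [h]; abel
            have hu'val : u' = u + vval F (χ W) := by
              rw [hsplit, vval_chi F W hWrays]
            have hVAL' : vval F a + vval F (χ R₁) = vval F β' + u' := by
              rw [hvalβ', hu'val, hVAL]; abel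
            have hvald' : vval F d' = vval F d + vval F (χ W) := by
              have h := vval_comb2 F d' d (χ W) (χ W) 1 0
                (by intro v; show d v + χ W v = _; ring)
              rw [one_smul, zero_smul, add_zero] at h
              exact h
            have hrel' : u' = vval F (χ R₁) + vval F d' := by
              rw [hu'val, hvald', hrel]; abel
            have hd'0 : ∀ v, 0 ≤ d' v := by
              intro v; show 0 ≤ d v + χ W v
              have := hd0 v; have := chi_nonneg W v; omega
            have hd'supp : ∀ v, d' v ≠ 0 → b v ≠ 0 := by
              intro v h
              rcases eq_or_ne (d v) 0 with h0 | h0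
              · have hχ : χ W v ≠ 0 := by
                  intro hc; apply h; show d v + χ W v = 0; rw [h0, hc]; ring
                have hvW : v ∈ W := by by_contra hc; exact hχ (chi_not_mem _ _ hc)
                exact hβsupp v (hWβ v hvW)
              · exact hdsupp v h0
            have hd'ne : ∃ v, d' v ≠ 0 := by
              obtain ⟨vd, hvd0⟩ := hdne
              refine ⟨vd, ?_⟩
              show d vd + χ W vd ≠ 0
              have := hd0 vd; have := chi_nonneg W vd; omega
            have hβ'tot : tot F β' < tot F b := by
              have h := tot_comb2 F β' β (χ W) (χ W) (-1) 0
                (by intro v; show β v - χ W v = _; ring)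
              rw [tot_chi F W hWrays] at h
              have hWc : 1 ≤ (W.card : ℤ) := by
                have := Finset.card_pos.mpr hWne; exact_mod_cast this
              have := hβtot
              omega
            have hℓu' : ℓτ u < ℓτ u' := by
              have h1 : ℓτ u' = ℓτ u + ∑ v ∈ W, ℓτ v := by
                rw [hsplit, map_add, map_sum]
              have h2 : ∑ v ∈ W, ℓτ v = W.card := by
                rw [Finset.sum_congr rfl (fun v hv => hℓτ v (hWτ v hv))]
                simp
              have hWc : 1 ≤ (W.card : ℤ) := by
                have := Finset.card_pos.mpr hWne; exact_mod_cast this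
              rw [h1, h2]; omega
            have hmeas : (F.rays.filter (fun r => ℓτ u' < ℓτ r)).card <
                (F.rays.filter (fun r => ℓτ u < ℓτ r)).card := by
              apply Finset.card_lt_card
              refine Finset.ssubset_iff_of_subset ?_ |>.mpr ?_
              · intro r hr
                obtain ⟨h1, h2⟩ := Finset.mem_filter.mp hr
                exact Finset.mem_filter.mpr ⟨h1, lt_trans hℓu' h2⟩
              · refine ⟨u', Finset.mem_filter.mpr ⟨hray', hℓu'⟩, ?_⟩
                intro hc
                exact lt_irrefl _ (Finset.mem_filter.mp hc).2
            exact IHc (F.rays.filter (fun r => ℓτ u' < ℓτ r)).card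
              (lt_of_lt_of_le hmeas hkc) u' β' d'
              hβ'0 hβ'supp hVAL' hray' hrel' hd'0 hd'supp hd'ne hβ'tot (le_refl _)
      · -- a u ≠ 0
        by_cases huR₁ : u ∈ R₁
        · -- u occurs in R₁ : null-type exit
          have hsplitchi : ∑ v ∈ R₁, v = u + ∑ v ∈ R₁.erase u, v := by
            conv_lhs => rw [← Finset.insert_erase huR₁]
            rw [Finset.sum_insert (Finset.notMem_erase u R₁)]
          have heraserays : R₁.erase u ⊆ F.rays :=
            fun v hv => hR₁rays (Finset.mem_of_mem_erase hv)
          have hchisplit : vval F (χ R₁) = vval F (χ (R₁.erase u)) + u := by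
            rw [vval_chi F R₁ hR₁rays, vval_chi F (R₁.erase u) heraserays, hsplitchi]
            abel
          have hrel0 : (0 : V n) = vval F (χ (R₁.erase u)) + vval F d := by
            have h := hrel
            rw [hchisplit] at h
            have h2 : vval F (χ (R₁.erase u)) + vval F d =
                (vval F (χ (R₁.erase u)) + u + vval F d) - u := by abel
            rw [h2, ← h, sub_self]
          by_cases hR₁' : (R₁.erase u).Nonempty
          · exact nullmove (R₁.erase u) d hR₁'
              (fun v hv => hR₁a v (Finset.mem_of_mem_erase hv)) hd0 hdsupp hrel0
          · have hempty : R₁.erase u = ∅ := Finset.not_nonempty_iff_eq_empty.mp hR₁'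
            have hchiempty : vval F (χ (R₁.erase u)) = 0 := by
              apply vval_zero_of
              intro v
              rw [hempty]
              exact chi_not_mem _ _ (Finset.notMem_empty v)
            rw [hchiempty, zero_add] at hrel0
            obtain ⟨vd, hvd⟩ := hdne
            exact cone_pos_ne_zero F τ₀ hτ₀ d (fun v h => hbτ v (hdsupp v h)) vd hvd hrel0.symm
        · -- cancel the common element u
          set a' := fun v => a v + χ R₁ v - (if v = u then 1 else 0) with ha'c_def
          have hvala' : vval F a' = vval F a + vval F (χ R₁) - u := by
            have h := vval_comb2 F a' a (χ R₁) (fun v => if v = u then 1 else 0) 1 (-1)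
              (by intro v; show a v + χ R₁ v - _ = _; ring)
            rw [vval_delta F u hurays, one_smul, neg_one_smul] at h
            rw [h]; abel
          have hval : vval F a' = vval F β := by rw [hvala', hVAL]; abel
          have ha'0 : ∀ v, 0 ≤ a' v := by
            intro v
            show 0 ≤ a v + χ R₁ v - (if v = u then 1 else 0)
            by_cases hv : v = u
            · subst hv
              rw [chi_not_mem _ _ huR₁, if_pos rfl]
              have := ha1 v hua
              omega
            · rw [if_neg hv]
              have := ha0 v; have := chi_nonneg R₁ v; omega
          have hsuppa' : ∀ v, a' v ≠ 0 → a v ≠ 0 := by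
            intro v h h0
            apply h
            show a v + χ R₁ v - (if v = u then 1 else 0) = 0
            have hvu : v ≠ u := by intro hc; subst hc; exact hua h0
            rw [h0, chi_not_mem _ _ (fun hc => hR₁a v hc h0), if_neg hvu]; ring
          obtain ⟨v₁, hv₁⟩ := hR₁ne
          have hv₁u : v₁ ≠ u := fun hc => huR₁ (hc ▸ hv₁)
          have ha'v₁ : a' v₁ ≠ 0 := by
            show a v₁ + χ R₁ v₁ - (if v₁ = u then 1 else 0) ≠ 0
            rw [chi_mem _ _ hv₁, if_neg hv₁u]
            have := ha1 v₁ (hR₁a v₁ hv₁); omega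
          by_cases hβz : ∀ v, β v = 0
          · have hz0 : vval F a' = 0 := by rw [hval, vval_zero_of F β hβz]
            exact cone_pos_ne_zero F σ₀ hσ₀ a' (fun v h => haσ v (hsuppa' v h)) v₁ ha'v₁ hz0
          · push_neg at hβz
            obtain ⟨wβ, hwβ⟩ := hβz
            refine IH2 (tot F β).toNat ?_ (Mp * tot F β + 1 - tot F a').toNat τ₀ a' β hτ₀
              ha'0 hβ0 (fun v h => haσ v (hsuppa' v h)) (fun v h => hbτ v (hβsupp v h))
              ?_ ⟨v₁, ha'v₁⟩ ⟨wβ, hwβ⟩ hval ?_ (le_refl _) (le_refl _)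
            · have h1 := tot_nonneg F β hβ0
              omega
            · intro v
              rcases hdisj v with h | h
              · left; by_contra hc; exact hsuppa' v hc h
              · right; by_contra hc; exact (hβsupp v hc) h
            · refine le_trans (Finset.card_le_card ?_) hk₁
              intro v hv
              obtain ⟨h1, h2⟩ := Finset.mem_filter.mp hv
              exact Finset.mem_filter.mpr ⟨h1, hsuppa' v h2⟩
    -- initialize the chain
    obtain ⟨v₂, hv₂⟩ := hR₂ne
    have hchiR₂supp : ∀ v, χ R₂ v ≠ 0 → b v ≠ 0 := fun v hv =>
      hR₂b v (by by_contra h; exact hv (chi_not_mem _ _ h))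
    have hu₀ : (∑ v ∈ R, v) = vval F (χ R₁) + vval F (χ R₂) := by
      rw [← hchiRval, vval_chi F R hRrays]
    refine chain (F.rays.filter (fun r => ℓτ (∑ v ∈ R, v) < ℓτ r)).card (∑ v ∈ R, v)
      (fun v => b v - χ R₂ v) (χ R₂) ?_ ?_ ?_ hray hu₀ (chi_nonneg R₂) hchiR₂supp
      ⟨v₂, by rw [chi_mem _ _ hv₂]; omega⟩ ?_ (le_refl _)
    · intro v; show 0 ≤ b v - χ R₂ v
      by_cases hv : v ∈ R₂
      · rw [chi_mem _ _ hv]; have := hb1 v (hR₂b v hv); omega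
      · rw [chi_not_mem _ _ hv]; have := hb0 v; omega
    · intro v h
      by_contra h0
      apply h; show b v - χ R₂ v = 0
      rw [h0, chi_not_mem _ _ (fun hc => hR₂b v hc h0)]; ring
    · have hβ₀val : vval F (fun v => b v - χ R₂ v) = vval F b - vval F (χ R₂) := by
        have h := vval_comb2 F (fun v => b v - χ R₂ v) b (χ R₂) (χ R₂) (-1) 0
          (by intro v; show b v - χ R₂ v = _; ring)
        rw [neg_one_smul, zero_smul, add_zero] at h
        rw [h]; abel
      rw [hβ₀val, hu₀, heq]; abel
    · have h := tot_comb2 F (fun v => b v - χ R₂ v) b (χ R₂) (χ R₂) (-1) 0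
        (by intro v; show b v - χ R₂ v = _; ring)
      rw [tot_chi F R₂ hR₂rays] at h
      have hc2 : 1 ≤ (R₂.card : ℤ) := by
        have := Finset.card_pos.mpr (⟨v₂, hv₂⟩ : R₂.Nonempty); exact_mod_cast this
      omega



theorem stmt_9' (n : ℕ) (F : CompleteNonsingFan n)
    (hprim : ∀ P, IsPrimitiveSet F P → (∑ v ∈ P, v = 0 ∨ ∑ v ∈ P, v ∈ F.rays))
    (P Q : Finset (Fin n → ℤ))
    (hP : IsPrimitiveSet F P) (hQ : IsPrimitiveSet F Q) (hPQ : P ≠ Q)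
    (ρ' : Fin n → ℤ) (hρ' : ρ' ∈ F.rays)
    (hsP : ∑ v ∈ P, v = ρ') (hsQ : ∑ v ∈ Q, v = ρ') :
    Disjoint P Q := by
  classical
  by_contra hnd
  obtain ⟨ρ, hρP, hρQ⟩ := Finset.not_disjoint_iff.mp hnd
  set σ := P.erase ρ with hσ_def
  set τ := Q.erase ρ with hτ_def
  have hσ : σ ∈ F.cones := hP.2.2 ρ hρP
  have hτ : τ ∈ F.cones := hQ.2.2 ρ hρQ
  have hPsum : ∑ v ∈ P, v = ρ + ∑ v ∈ σ, v := by
    conv_lhs => rw [← Finset.insert_erase hρP]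
    rw [Finset.sum_insert (Finset.notMem_erase ρ P)]
  have hQsum : ∑ v ∈ Q, v = ρ + ∑ v ∈ τ, v := by
    conv_lhs => rw [← Finset.insert_erase hρQ]
    rw [Finset.sum_insert (Finset.notMem_erase ρ Q)]
  have hστ : ∑ v ∈ σ, v = ∑ v ∈ τ, v := by
    have h1 : ρ + ∑ v ∈ σ, v = ρ + ∑ v ∈ τ, v := by
      rw [← hPsum, ← hQsum, hsP, hsQ]
    exact add_left_cancel h1
  have key : ∀ (s t : Finset (Fin n → ℤ)), ∑ v ∈ s, v = (∑ v ∈ s ∩ t, v) + ∑ v ∈ s \ t, v := by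
    intro s t
    rw [← Finset.sum_inter_add_sum_sdiff s t (fun v => v)]
  have hAB : ∑ v ∈ σ \ τ, v = ∑ v ∈ τ \ σ, v := by
    have h1 := key σ τ
    have h2 := key τ σ
    rw [Finset.inter_comm] at h2
    rw [h1, h2] at hστ
    exact add_left_cancel hστ
  have chi_supp : ∀ (T : Finset (Fin n → ℤ)) v, χ T v ≠ 0 → v ∈ T := by
    intro T v h
    by_contra hc; exact h (chi_not_mem _ _ hc)
  have hσrays := F.cone_rays σ hσ
  have hτrays := F.cone_rays τ hτ
  by_cases hA : (σ \ τ) = ∅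
  · by_cases hB : (τ \ σ) = ∅
    · -- σ = τ hence P = Q
      have hsub1 : σ ⊆ τ := Finset.sdiff_eq_empty_iff_subset.mp hA
      have hsub2 : τ ⊆ σ := Finset.sdiff_eq_empty_iff_subset.mp hB
      have hστeq : σ = τ := Finset.Subset.antisymm hsub1 hsub2
      apply hPQ
      rw [← Finset.insert_erase hρP, ← Finset.insert_erase hρQ, ← hσ_def, ← hτ_def, hστeq]
    · -- ∑ over τ \ σ is zero, contradiction with independence of τ
      obtain ⟨w, hw⟩ := Finset.nonempty_iff_ne_empty.mpr hB
      have h0 : vval F (χ (τ \ σ)) = 0 := by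
        rw [vval_chi F (τ \ σ) (fun v hv => hτrays (Finset.sdiff_subset hv)), ← hAB]
        rw [hA]
        simp
      exact cone_pos_ne_zero F τ hτ (χ (τ \ σ))
        (fun v h => Finset.sdiff_subset (chi_supp _ v h)) w
        (by rw [chi_mem _ _ hw]; omega) h0
  · by_cases hB : (τ \ σ) = ∅
    · obtain ⟨w, hw⟩ := Finset.nonempty_iff_ne_empty.mpr hA
      have h0 : vval F (χ (σ \ τ)) = 0 := by
        rw [vval_chi F (σ \ τ) (fun v hv => hσrays (Finset.sdiff_subset hv)), hAB]
        rw [hB]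
        simp
      exact cone_pos_ne_zero F σ hσ (χ (σ \ τ))
        (fun v h => Finset.sdiff_subset (chi_supp _ v h)) w
        (by rw [chi_mem _ _ hw]; omega) h0
    · -- both sides nonempty: apply the main lemma
      obtain ⟨wa, hwa⟩ := Finset.nonempty_iff_ne_empty.mpr hA
      obtain ⟨wb, hwb⟩ := Finset.nonempty_iff_ne_empty.mpr hB
      obtain ⟨ℓ, hℓ1⟩ := exists_unit_functional F σ hσ
      set Mp : ℤ := ((F.rays.sup fun r => (ℓ r).toNat : ℕ) : ℤ) with hMp_def
      have hM : ∀ r ∈ F.rays, ℓ r ≤ Mp := by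
        intro r hr
        refine le_trans (Int.self_le_toNat _) ?_
        rw [hMp_def]
        exact_mod_cast Finset.le_sup (f := fun r => (ℓ r).toNat) hr
      have heqv : vval F (χ (σ \ τ)) = vval F (χ (τ \ σ)) := by
        rw [vval_chi F (σ \ τ) (fun v hv => hσrays (Finset.sdiff_subset hv)),
          vval_chi F (τ \ σ) (fun v hv => hτrays (Finset.sdiff_subset hv)), hAB]
      exact main F hprim σ hσ ℓ hℓ1 Mp hM
        (F.rays.filter (fun v => χ (σ \ τ) v ≠ 0)).card
        (tot F (χ (τ \ σ))).toNat
        (Mp * tot F (χ (τ \ σ)) + 1 - tot F (χ (σ \ τ))).toNat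
        τ (χ (σ \ τ)) (χ (τ \ σ)) hτ
        (chi_nonneg _) (chi_nonneg _)
        (fun v h => Finset.sdiff_subset (chi_supp _ v h))
        (fun v h => Finset.sdiff_subset (chi_supp _ v h))
        (by
          intro v
          by_cases hv : v ∈ σ \ τ
          · right
            apply chi_not_mem
            intro hc
            exact (Finset.mem_sdiff.mp hc).2 ((Finset.mem_sdiff.mp hv).1)
          · left; exact chi_not_mem _ _ hv)
        ⟨wa, by rw [chi_mem _ _ hwa]; omega⟩
        ⟨wb, by rw [chi_mem _ _ hwb]; omega⟩
        heqv (le_refl _) (le_refl _) (le_refl _)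

end StmtNine

/-- Lemma 3.7, case ρ' = ρ̂': in a complete nonsingular fan in which
every primitive relation has right-hand side 0 or a single ray generator, two
distinct primitive sets whose generator sums equal the same ray generator ρ'
are disjoint. -/
theorem stmt_9 (n : ℕ) (F : CompleteNonsingFan n)
    (hprim : ∀ P, IsPrimitiveSet F P → (∑ v ∈ P, v = 0 ∨ ∑ v ∈ P, v ∈ F.rays))
    (P Q : Finset (Fin n → ℤ))
    (hP : IsPrimitiveSet F P) (hQ : IsPrimitiveSet F Q) (hPQ : P ≠ Q)
    (ρ' : Fin n → ℤ) (hρ' : ρ' ∈ F.rays)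
    (hsP : ∑ v ∈ P, v = ρ') (hsQ : ∑ v ∈ Q, v = ρ') :
    Disjoint P Q := by
  exact StmtNine.stmt_9' n F hprim P Q hP hQ hPQ ρ' hρ' hsP hsQ
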